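/- arXiv:2009.08834 — 5 statements merged into one kernel-verified Lean document; each statement's English description precedes it below -/
import Mathlib

section
/- Quantitative reversed triangle inequality: there is a constant A = 1/10 such that for all u, v in the positive causal cone of Minkowski space ℝ^{n+1}, one has |u+v|² ≥ |u+v|·(|u| + |v|) + A·D², where D is the Euclidean distance from u (equivalently from v) to the Euclidean line spanned by u+v. -/
/-- The Minkowski product on `ℝ^(n+1)`: `⟨u,v⟩ = u_t v_t − u_x · v_x`. -/
noncomputable def mink {n : ℕ} (u v : EuclideanSpace ℝ (Fin (n + 1))) : ℝ :=
  u 0 * v 0 - ∑ i : Fin n, u i.succ * v i.succ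

/-- The Lorentzian norm of a causal vector. -/
noncomputable def mnorm {n : ℕ} (w : EuclideanSpace ℝ (Fin (n + 1))) : ℝ :=
  Real.sqrt (mink w w)

open RealInnerProductSpace

lemma key_alg (s t p q S D E a b c : ℝ) (hs : 0 < s) (ht : 0 < t)
    (hp0 : 0 ≤ p) (hq0 : 0 ≤ q) (hps : p ≤ s) (hqt : q ≤ t)
    (hS1 : S ≤ p*q) (hS2 : -(p*q) ≤ S) (hD : 0 ≤ D)
    (hE : E = (s+t)*(s+t) + (p^2+q^2+2*S))
    (hDG : E * D^2 ≤ (s*s+p^2)*(t*t+q^2) - (s*t+S)^2)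
    (ha0 : 0 ≤ a) (ha2 : a^2 = s*s-p^2)
    (hb0 : 0 ≤ b) (hb2 : b^2 = t*t-q^2)
    (hc0 : 0 ≤ c) (hc2 : c^2 = (s+t)*(s+t)-(p^2+q^2+2*S)) :
    c * (a + b) + (1/10)*D^2 ≤ c^2 := by
  have hpq_st : p*q ≤ s*t := mul_le_mul hps hqt hq0 hs.le
  have hst : 0 < s*t := mul_pos hs ht
  have hM0 : 0 ≤ s*t - S := by linarith
  have hm0 : 0 ≤ p*q - S := by linarith
  have hr0 : 0 ≤ a*b := mul_nonneg ha0 hb0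
  have hab2 : (a*b)^2 = (s*s-p^2)*(t*t-q^2) := by rw [mul_pow, ha2, hb2]
  have hr2M : (a*b)^2 ≤ (s*t-S)^2 := by
    have h1 := sq_nonneg (s*q - t*p)
    have h2 : 0 ≤ (p*q-S)*(2*(s*t)-p*q-S) := mul_nonneg hm0 (by linarith)
    linarith [hab2]
  have hMr : a*b ≤ s*t - S := by
    have h := Real.sqrt_le_sqrt hr2M
    rwa [Real.sqrt_sq hr0, Real.sqrt_sq hM0] at h
  have hE0 : 0 < E := by
    have h1 := sq_nonneg (p-q)
    have h2 : 0 < (s+t)*(s+t) := mul_pos (by linarith) (by linarith)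
    linarith
  have hE4 : 4*(s*t) ≤ E := by
    have h1 := sq_nonneg (p-q)
    have h2 := sq_nonneg (s-t)
    linarith
  -- core polynomial bound: 2M * G ≤ 10 E (M² - a²b²-as-poly)
  have pA : 2*(s*t-S)*((s*q-t*p)^2) ≤ 10*E*((s*q-t*p)^2) := by
    apply mul_le_mul_of_nonneg_right _ (sq_nonneg _)
    linarith
  have pB1 : (2*(s*t-S))*(2*(s*t)+p*q+S) ≤ (10*(2*(s*t)-p*q-S))*E :=
    mul_le_mul (by linarith) (by linarith) (by linarith) (by linarith)
  have pB := mul_le_mul_of_nonneg_left pB1 hm0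
  have hcore : 2*(s*t-S)*((s*s+p^2)*(t*t+q^2)-(s*t+S)^2)
      ≤ 10*E*((s*t-S)^2 - (s*s-p^2)*(t*t-q^2)) := by linarith [pA, pB]
  -- G ≤ 10 (M - ab) E
  have hGle : (s*s+p^2)*(t*t+q^2)-(s*t+S)^2 ≤ 10*((s*t-S)-a*b)*E := by
    rcases eq_or_lt_of_le hM0 with h0 | h0
    · -- s*t = S : degenerate, everything 0
      have hpq : p*q = s*t := le_antisymm hpq_st (by linarith)
      have e1 : 0 ≤ s*(t-q) := mul_nonneg hs.le (by linarith)
      have e2 : 0 ≤ q*(s-p) := mul_nonneg hq0 (by linarith)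
      have e3 : s*(t-q) + q*(s-p) = 0 := by linarith [hpq]
      have hq' : t - q = 0 := by
        rcases mul_eq_zero.mp (by linarith : s*(t-q) = 0) with h | h
        · exact absurd h (ne_of_gt hs)
        · exact h
      have hp' : s - p = 0 := by
        rcases mul_eq_zero.mp (by linarith : q*(s-p) = 0) with h | h
        · exfalso; linarith
        · exact h
      have hab0 : a*b = 0 := le_antisymm (by linarith) hr0
      have hqq : q = t := by linarith
      have hpp : p = s := by linarith
      have hSS : S = s*t := by linarith
      rw [hqq, hpp, hSS, hab0]
      ring_nf
      try linarith
    · have d1 : (s*t-S)^2-(s*s-p^2)*(t*t-q^2) ≤ ((s*t-S)-a*b)*(2*(s*t-S)) := by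
        linarith [sq_nonneg ((s*t-S)-a*b), hab2]
      have h2 := mul_le_mul_of_nonneg_left d1 (by linarith : (0:ℝ) ≤ 10*E)
      have h3 : ((s*s+p^2)*(t*t+q^2)-(s*t+S)^2) * (2*(s*t-S))
          ≤ (10*((s*t-S)-a*b)*E) * (2*(s*t-S)) := by linarith [hcore, h2]
      exact le_of_mul_le_mul_right h3 (by linarith)
  have hD2 : D^2 ≤ 10*((s*t-S) - a*b) := by
    have h1 : E * D^2 ≤ E * (10*((s*t-S)-a*b)) := by linarith [hDG, hGle]
    exact le_of_mul_le_mul_left h1 hE0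
  have hX : c^2 = a^2 + b^2 + 2*(s*t-S) := by
    rw [hc2, ha2, hb2]; ring
  have hcab : c*(a+b) ≤ (c^2+(a+b)^2)/2 := by linarith [sq_nonneg (c-(a+b))]
  linarith [hcab, hD2, hX]

/-- Quantitative reversed triangle inequality: with `A = 1/10`, for `u, v` in the
positive causal cone, `|u+v|² ≥ |u+v|·(|u|+|v|) + A·D²`, where `D` is the Euclidean
distance from `u` to the line spanned by `u+v`. -/
theorem quantitative_reversed_triangle {n : ℕ} (u v : EuclideanSpace ℝ (Fin (n + 1)))
    (hu : 0 ≤ mink u u) (hut : 0 < u 0)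
    (hv : 0 ≤ mink v v) (hvt : 0 < v 0) :
    mnorm (u + v) * (mnorm u + mnorm v)
        + (1 / 10) * (Metric.infDist u (Submodule.span ℝ {u + v} : Set (EuclideanSpace ℝ (Fin (n + 1))))) ^ 2
      ≤ mnorm (u + v) ^ 2 := by
  -- coordinate quantities
  set s := u 0 with hsdef
  set t := v 0 with htdef
  set S := ∑ i : Fin n, u i.succ * v i.succ with hSdef
  have hP0 : 0 ≤ ∑ i : Fin n, u i.succ * u i.succ :=
    Finset.sum_nonneg (fun i _ => mul_self_nonneg _)
  have hQ0 : 0 ≤ ∑ i : Fin n, v i.succ * v i.succ :=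
    Finset.sum_nonneg (fun i _ => mul_self_nonneg _)
  obtain ⟨p, hp0, hp2⟩ : ∃ p, 0 ≤ p ∧ p^2 = ∑ i : Fin n, u i.succ * u i.succ :=
    ⟨Real.sqrt _, Real.sqrt_nonneg _, Real.sq_sqrt hP0⟩
  obtain ⟨q, hq0, hq2⟩ : ∃ q, 0 ≤ q ∧ q^2 = ∑ i : Fin n, v i.succ * v i.succ :=
    ⟨Real.sqrt _, Real.sqrt_nonneg _, Real.sq_sqrt hQ0⟩
  have hmu : mink u u = s*s - p^2 := by rw [hp2]; rfl
  have hmv : mink v v = t*t - q^2 := by rw [hq2]; rfl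
  -- Cauchy-Schwarz on spatial parts
  have hCS : S^2 ≤ (p*q)^2 := by
    rw [hSdef, mul_pow, hp2, hq2]
    calc (∑ i : Fin n, u i.succ * v i.succ)^2
        ≤ (∑ i : Fin n, (u i.succ)^2) * (∑ i : Fin n, (v i.succ)^2) :=
          Finset.sum_mul_sq_le_sq_mul_sq Finset.univ _ _
      _ = (∑ i : Fin n, u i.succ * u i.succ) * (∑ i : Fin n, v i.succ * v i.succ) := by
          simp [sq]
  have hSabs : |S| ≤ p*q := by
    have h := Real.sqrt_le_sqrt hCS
    rwa [Real.sqrt_sq_eq_abs, Real.sqrt_sq (mul_nonneg hp0 hq0)] at h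
  have hS1 : S ≤ p*q := (abs_le.mp hSabs).2
  have hS2 : -(p*q) ≤ S := (abs_le.mp hSabs).1
  -- causal bounds
  have hps : p ≤ s := by
    have h2 : p^2 ≤ s^2 := by rw [hmu] at hu; linarith [hu]
    have h := Real.sqrt_le_sqrt h2
    rwa [Real.sqrt_sq hp0, Real.sqrt_sq hut.le] at h
  have hqt : q ≤ t := by
    have h2 : q^2 ≤ t^2 := by rw [hmv] at hv; linarith [hv]
    have h := Real.sqrt_le_sqrt h2
    rwa [Real.sqrt_sq hq0, Real.sqrt_sq hvt.le] at h
  -- mink of the sum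
  have haddsum : ∑ i : Fin n, (u + v) i.succ * (u + v) i.succ = p^2 + 2*S + q^2 := by
    have h1 : ∀ i : Fin n, (u + v) i.succ * (u + v) i.succ
        = u i.succ * u i.succ + 2*(u i.succ * v i.succ) + v i.succ * v i.succ := by
      intro i; simp only [PiLp.add_apply]; ring
    rw [Finset.sum_congr rfl (fun i _ => h1 i)]
    rw [Finset.sum_add_distrib, Finset.sum_add_distrib, ← Finset.mul_sum, hp2, hq2, hSdef]
  have hmw : mink (u+v) (u+v) = (s+t)*(s+t) - (p^2+q^2+2*S) := by
    show (u+v) 0 * (u+v) 0 - _ = _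
    rw [haddsum]
    simp only [PiLp.add_apply, hsdef, htdef]
    ring
  -- norms squared
  have ha2 : (mnorm u)^2 = s*s - p^2 := by rw [mnorm, Real.sq_sqrt hu, hmu]
  have hb2 : (mnorm v)^2 = t*t - q^2 := by rw [mnorm, Real.sq_sqrt hv, hmv]
  have hpq_st : p*q ≤ s*t := mul_le_mul hps hqt hq0 hut.le
  have hw0 : 0 ≤ mink (u+v) (u+v) := by
    rw [hmw]
    have h1 : (p+q)*(p+q) ≤ (s+t)*(s+t) :=
      mul_le_mul (by linarith) (by linarith) (by linarith) (by linarith)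
    linarith [h1, hS1]
  have hc2 : (mnorm (u+v))^2 = (s+t)*(s+t) - (p^2+q^2+2*S) := by
    rw [mnorm, Real.sq_sqrt hw0, hmw]
  -- inner products in coordinates
  have hiuu : ⟪u, u⟫ = s*s + p^2 := by
    simp only [PiLp.inner_apply, RCLike.inner_apply, conj_trivial]
    rw [Fin.sum_univ_succ, hp2]
  have hivv : ⟪v, v⟫ = t*t + q^2 := by
    simp only [PiLp.inner_apply, RCLike.inner_apply, conj_trivial]
    rw [Fin.sum_univ_succ, hq2]
  have hiuv : ⟪u, v⟫ = s*t + S := by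
    simp only [PiLp.inner_apply, RCLike.inner_apply, conj_trivial]
    rw [Fin.sum_univ_succ, hSdef]
    exact congrArg₂ (· + ·) (mul_comm _ _) (Finset.sum_congr rfl (fun i _ => mul_comm _ _))
  -- the distance bound
  set D := Metric.infDist u (Submodule.span ℝ {u + v} : Set (EuclideanSpace ℝ (Fin (n + 1)))) with hDdef
  have hD0 : 0 ≤ D := Metric.infDist_nonneg
  have hwne : (0:ℝ) < ‖u + v‖^2 := by
    have : ⟪u+v, u+v⟫ = (s+t)*(s+t) + (p^2+q^2+2*S) := by
      rw [real_inner_add_add_self, hiuu, hiuv, hivv]; ring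
    rw [← real_inner_self_eq_norm_sq, this]
    have h1 : 0 < (s+t)*(s+t) := mul_pos (by linarith) (by linarith)
    linarith [sq_nonneg (p-q), h1, hS2]
  have hDG : ‖u+v‖^2 * D^2 ≤ ‖u‖^2 * ‖u+v‖^2 - ⟪u,u+v⟫^2 := by
    set c₀ := ⟪u, u+v⟫ / ‖u+v‖^2 with hc₀
    have hz : c₀ • (u+v) ∈ (Submodule.span ℝ {u + v} : Set (EuclideanSpace ℝ (Fin (n + 1)))) :=
      Submodule.smul_mem _ _ (Submodule.mem_span_singleton_self _)
    have hDle : D ≤ ‖u - c₀ • (u+v)‖ := by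
      rw [hDdef, ← dist_eq_norm]
      exact Metric.infDist_le_dist_of_mem hz
    have hD2le : D^2 ≤ ‖u - c₀ • (u+v)‖^2 := by
      apply pow_le_pow_left₀ hD0 hDle
    have hexp : ‖u+v‖^2 * ‖u - c₀ • (u+v)‖^2 = ‖u‖^2 * ‖u+v‖^2 - ⟪u,u+v⟫^2 := by
      rw [norm_sub_sq_real, real_inner_smul_right, norm_smul, Real.norm_eq_abs, mul_pow, sq_abs,
        hc₀]
      have hne : ‖u+v‖ ≠ 0 := by
        intro h; rw [h] at hwne; norm_num at hwne
      field_simp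
      ring
    have h1 : ‖u+v‖^2 * D^2 ≤ ‖u+v‖^2 * ‖u - c₀ • (u+v)‖^2 :=
      mul_le_mul_of_nonneg_left hD2le (by positivity)
    rw [hexp] at h1
    exact h1
  have hDGc : ((s+t)*(s+t) + (p^2+q^2+2*S)) * D^2 ≤ (s*s+p^2)*(t*t+q^2) - (s*t+S)^2 := by
    have hEc : ⟪u+v, u+v⟫ = (s+t)*(s+t) + (p^2+q^2+2*S) := by
      rw [real_inner_add_add_self, hiuu, hiuv, hivv]; ring
    have h3 : ‖u+v‖^2 = (s+t)*(s+t) + (p^2+q^2+2*S) := by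
      rw [← real_inner_self_eq_norm_sq, hEc]
    have h4 : ‖u‖^2 = s*s + p^2 := by
      rw [← real_inner_self_eq_norm_sq, hiuu]
    have h5 : ⟪u, u+v⟫ = (s*s+p^2) + (s*t+S) := by rw [inner_add_right, hiuu, hiuv]
    calc ((s+t)*(s+t) + (p^2+q^2+2*S)) * D^2 = ‖u+v‖^2 * D^2 := by rw [h3]
      _ ≤ ‖u‖^2 * ‖u+v‖^2 - ⟪u,u+v⟫^2 := hDG
      _ = (s*s+p^2)*(t*t+q^2) - (s*t+S)^2 := by rw [h3, h4, h5]; ring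
  exact key_alg s t p q S D ((s+t)*(s+t) + (p^2+q^2+2*S)) (mnorm u) (mnorm v) (mnorm (u+v))
    hut hvt hp0 hq0 hps hqt hS1 hS2 hD0 rfl hDGc
    (Real.sqrt_nonneg _) ha2 (Real.sqrt_nonneg _) hb2 (Real.sqrt_nonneg _) hc2
end

section
/- Let s : [a,b] → [0,∞) be Lipschitz continuous with |s'(t)| ≤ C·s(t)² for almost every t, where C > 0. Then either s ≡ 0 on [a,b], or s(t) > 0 for all t in [a,b] and the function t ↦ 1/s(t) is C-Lipschitz on [a,b]. -/
open MeasureTheory Set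


lemma stieltjes_eq_of_continuous {f : ℝ → ℝ} (hf : Monotone f) (hc : Continuous f) (x : ℝ) :
    hf.stieltjesFunction x = f x := by
  rw [hf.stieltjesFunction_eq]
  exact hf.continuousWithinAt_Ioi_iff_rightLim_eq.mp hc.continuousAt.continuousWithinAt

lemma mono_int {f d : ℝ → ℝ} (hf : Monotone f) (hc : Continuous f) {x y : ℝ} (hxy : x ≤ y)
    (hd : ∀ᵐ t ∂(volume.restrict (Ioc x y)), HasDerivAt f (d t) t) :
    IntegrableOn d (Ioc x y) volume ∧ (∫ t in Ioc x y, d t) ≤ f y - f x := by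
  set μ := hf.stieltjesFunction.measure with hμ
  have hrn : ∀ᵐ t ∂(volume.restrict (Ioc x y)), d t = (μ.rnDeriv volume t).toReal := by
    filter_upwards [hd, ae_restrict_of_ae hf.ae_hasDerivAt] with t h1 h2
    exact h1.unique h2
  have hμIoc : μ (Ioc x y) = ENNReal.ofReal (f y - f x) := by
    rw [hμ, StieltjesFunction.measure_Ioc, stieltjes_eq_of_continuous hf hc,
      stieltjes_eq_of_continuous hf hc]
  have hlint : (∫⁻ t in Ioc x y, μ.rnDeriv volume t) ≤ μ (Ioc x y) :=
    Measure.setLIntegral_rnDeriv_le _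
  have hne : (∫⁻ t in Ioc x y, μ.rnDeriv volume t) ≠ ⊤ :=
    (hlint.trans_lt (by rw [hμIoc]; exact ENNReal.ofReal_lt_top)).ne
  have hint : IntegrableOn (fun t => (μ.rnDeriv volume t).toReal) (Ioc x y) volume :=
    integrable_toReal_of_lintegral_ne_top (μ.measurable_rnDeriv volume).aemeasurable hne
  have hintd : IntegrableOn d (Ioc x y) volume :=
    hint.congr (hrn.mono fun t h => h.symm)
  refine ⟨hintd, ?_⟩
  rw [integral_congr_ae hrn,
    integral_toReal ((μ.measurable_rnDeriv volume).aemeasurable.restrict)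
      (ae_lt_top (μ.measurable_rnDeriv volume) hne)]
  calc (∫⁻ t in Ioc x y, μ.rnDeriv volume t).toReal ≤ (μ (Ioc x y)).toReal :=
        ENNReal.toReal_mono (by rw [hμIoc]; exact ENNReal.ofReal_ne_top) hlint
    _ = f y - f x := by rw [hμIoc, ENNReal.toReal_ofReal (sub_nonneg.2 (hf hxy))]

lemma lip_ftc {g d : ℝ → ℝ} {K : NNReal} (hg : LipschitzWith K g) {x y : ℝ} (hxy : x ≤ y)
    (hd : ∀ᵐ t ∂(volume.restrict (Ioc x y)), HasDerivAt g (d t) t) :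
    g y - g x = ∫ t in Ioc x y, d t := by
  have key : ∀ u v : ℝ, u ≤ v → |g v - g u| ≤ K * (v - u) := by
    intro u v huv
    have := hg.dist_le_mul v u
    rwa [Real.dist_eq, Real.dist_eq, abs_of_nonneg (sub_nonneg.2 huv)] at this
  have h1m : Monotone (fun t => (K : ℝ) * t + g t) := by
    intro u v huv
    have h := (abs_le.mp (key u v huv)).1
    simp only
    linarith
  have h2m : Monotone (fun t => (K : ℝ) * t - g t) := by
    intro u v huv
    have h := (abs_le.mp (key u v huv)).2
    simp only
    linarith
  have h1c : Continuous (fun t => (K : ℝ) * t + g t) :=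
    (continuous_const.mul continuous_id).add hg.continuous
  have h2c : Continuous (fun t => (K : ℝ) * t - g t) :=
    (continuous_const.mul continuous_id).sub hg.continuous
  have hd1 : ∀ᵐ t ∂(volume.restrict (Ioc x y)),
      HasDerivAt (fun t => (K : ℝ) * t + g t) ((K : ℝ) + d t) t := by
    filter_upwards [hd] with t ht
    exact (((hasDerivAt_id t).const_mul (K : ℝ)).add ht).congr_deriv (by simp)
  have hd2 : ∀ᵐ t ∂(volume.restrict (Ioc x y)),
      HasDerivAt (fun t => (K : ℝ) * t - g t) ((K : ℝ) - d t) t := by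
    filter_upwards [hd] with t ht
    exact (((hasDerivAt_id t).const_mul (K : ℝ)).sub ht).congr_deriv (by simp)
  obtain ⟨hint1, hle1⟩ := mono_int h1m h1c hxy hd1
  obtain ⟨hint2, hle2⟩ := mono_int h2m h2c hxy hd2
  have hconst : IntegrableOn (fun _ : ℝ => (K : ℝ)) (Ioc x y) volume :=
    integrableOn_const measure_Ioc_lt_top.ne
  have hintd : IntegrableOn d (Ioc x y) volume := by
    have h := hint1.sub hconst
    refine h.congr (Filter.Eventually.of_forall fun t => ?_)
    simp
  have hvol : (volume (Ioc x y)).toReal = y - x := by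
    rw [Real.volume_Ioc, ENNReal.toReal_ofReal (sub_nonneg.2 hxy)]
  have hci : (∫ t in Ioc x y, (K : ℝ)) = (K : ℝ) * (y - x) := by
    rw [setIntegral_const, measureReal_def, hvol, smul_eq_mul, mul_comm]
  have e1 : (∫ t in Ioc x y, ((K : ℝ) + d t)) = (K : ℝ) * (y - x) + ∫ t in Ioc x y, d t := by
    rw [integral_add hconst hintd, hci]
  have e2 : (∫ t in Ioc x y, ((K : ℝ) - d t)) = (K : ℝ) * (y - x) - ∫ t in Ioc x y, d t := by
    rw [integral_sub hconst hintd, hci]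
  rw [e1] at hle1
  rw [e2] at hle2
  linarith


/-- If `s : [a,b] → [0,∞)` is Lipschitz with `|s'| ≤ C s²` a.e., then either `s ≡ 0`
or `s > 0` everywhere and `1/s` is `C`-Lipschitz on `[a,b]`. -/
theorem zero_or_reciprocal_lipschitz {a b C : ℝ} (hC : 0 < C)
    (s : ℝ → ℝ) {K : NNReal}
    (hlip : LipschitzOnWith K s (Set.Icc a b))
    (hnonneg : ∀ t ∈ Set.Icc a b, 0 ≤ s t)
    (hder : ∀ᵐ t ∂(volume.restrict (Set.Icc a b)),
      ∃ d : ℝ, HasDerivAt s d t ∧ |d| ≤ C * (s t) ^ 2) :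
    (∀ t ∈ Set.Icc a b, s t = 0) ∨
      ((∀ t ∈ Set.Icc a b, 0 < s t) ∧
        LipschitzOnWith C.toNNReal (fun t => 1 / s t) (Set.Icc a b)) := by
  classical
  by_cases hab : a ≤ b
  swap
  · exact Or.inl fun t ht => absurd (ht.1.trans ht.2) hab
  obtain ⟨g, hgl, hgeq⟩ := hlip.extend_real
  have hcont : ContinuousOn s (Set.Icc a b) := hlip.continuousOn
  obtain ⟨tM, htM, hM⟩ := isCompact_Icc.exists_isMaxOn (Set.nonempty_Icc.2 hab) hcont
  set M := s tM with hMdef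
  have hMnn : 0 ≤ M := hnonneg tM htM
  have hsleM : ∀ t ∈ Set.Icc a b, s t ≤ M := fun t ht => hM ht
  -- a.e. derivative data on subintervals, with interior membership
  have hder' : ∀ x y : ℝ, x ∈ Set.Icc a b → y ∈ Set.Icc a b →
      ∀ᵐ t ∂(volume.restrict (Set.Ioc x y)),
        t ∈ Set.Ioo a b ∧ ∃ d, HasDerivAt s d t ∧ |d| ≤ C * (s t) ^ 2 := by
    intro x y hx hy
    have hsub : Set.Ioc x y ⊆ Set.Icc a b :=
      fun t ht => ⟨hx.1.trans ht.1.le, ht.2.trans hy.2⟩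
    have h1 : ∀ᵐ t ∂(volume.restrict (Set.Ioc x y)),
        ∃ d, HasDerivAt s d t ∧ |d| ≤ C * (s t) ^ 2 :=
      ae_restrict_of_ae_restrict_of_subset hsub hder
    have h2 : ∀ᵐ t ∂(volume.restrict (Set.Ioc x y)), t ∈ Set.Ioc x y :=
      ae_restrict_mem measurableSet_Ioc
    have h3 : ∀ᵐ t ∂(volume.restrict (Set.Ioc x y)), t ≠ b := by
      refine ae_restrict_of_ae ?_
      rw [ae_iff]
      convert Real.volume_singleton (a := b) using 2
      ext u; simp
    filter_upwards [h1, h2, h3] with t h1 h2 h3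
    exact ⟨⟨hx.1.trans_lt h2.1, lt_of_le_of_ne (h2.2.trans hy.2) h3⟩, h1⟩
  -- a canonical choice of derivative for g
  set D : ℝ → ℝ := fun t => if h : ∃ u, HasDerivAt g u t then h.choose else 0 with hD
  have hDspec : ∀ t, (∃ u, HasDerivAt g u t) → HasDerivAt g (D t) t := by
    intro t h; rw [hD]; simp only [dif_pos h]; exact h.choose_spec
  set L := C * M with hL
  have hL0 : 0 ≤ L := mul_nonneg hC.le hMnn
  -- key integral estimate
  have hest : ∀ x ∈ Set.Icc a b, ∀ y ∈ Set.Icc a b, x ≤ y →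
      |s y - s x| ≤ L * ∫ t in Set.Ioc x y, s t := by
    intro x hx y hy hxy
    have hsub : Set.Ioc x y ⊆ Set.Icc a b :=
      fun t ht => ⟨hx.1.trans ht.1.le, ht.2.trans hy.2⟩
    have hae := hder' x y hx hy
    have hgs : ∀ t ∈ Set.Ioo a b, ∀ d : ℝ, HasDerivAt s d t → HasDerivAt g d t := by
      intro t ht d hd
      have hnhds : Set.Icc a b ∈ nhds t := Icc_mem_nhds ht.1 ht.2
      exact hd.congr_of_eventuallyEq
        (Filter.eventuallyEq_of_mem hnhds fun u hu => (hgeq hu).symm)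
    have hgd : ∀ᵐ t ∂(volume.restrict (Set.Ioc x y)), HasDerivAt g (D t) t := by
      filter_upwards [hae] with t ht
      obtain ⟨htm, d, hd, _⟩ := ht
      exact hDspec t ⟨d, hgs t htm d hd⟩
    have hbd : ∀ᵐ t ∂(volume.restrict (Set.Ioc x y)), ‖D t‖ ≤ L * s t := by
      filter_upwards [hae, ae_restrict_mem measurableSet_Ioc] with t ht htm'
      obtain ⟨htm, d, hd, hdb⟩ := ht
      have hDeq : D t = d := (hDspec t ⟨d, hgs t htm d hd⟩).unique (hgs t htm d hd)
      rw [Real.norm_eq_abs, hDeq]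
      have h1 := hsleM t (hsub htm')
      have h2 := hnonneg t (hsub htm')
      calc |d| ≤ C * s t ^ 2 := hdb
        _ ≤ L * s t := by
            rw [hL]
            nlinarith [mul_nonneg (mul_nonneg hC.le h2) (sub_nonneg.2 h1)]
    have heq := lip_ftc hgl hxy hgd
    have hseq : s y - s x = ∫ t in Set.Ioc x y, D t := by
      rw [hgeq hy, hgeq hx]; exact heq
    have hints : IntegrableOn (fun t => L * s t) (Set.Ioc x y) volume :=
      ((hcont.integrableOn_Icc).mono_set hsub).const_mul L
    calc |s y - s x| = ‖∫ t in Set.Ioc x y, D t‖ := by rw [hseq, Real.norm_eq_abs]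
      _ ≤ ∫ t in Set.Ioc x y, L * s t := norm_integral_le_of_norm_le hints hbd
      _ = L * ∫ t in Set.Ioc x y, s t := integral_const_mul _ _
  -- zero propagation
  have hzero_all : (∃ t₁ ∈ Set.Icc a b, s t₁ = 0) → ∀ t ∈ Set.Icc a b, s t = 0 := by
    rintro ⟨t₁, ht₁, hs₁⟩ t ht
    set F : ℝ → ℝ := fun y => ∫ u in t₁..y, g u with hF
    have hFd : ∀ y, HasDerivAt F (g y) y := fun y =>
      (hgl.continuous.integral_hasStrictDerivAt t₁ y).hasDerivAt
    have hFeq : ∀ y ∈ Set.Icc a b, t₁ ≤ y → F y = ∫ u in Set.Ioc t₁ y, s u := by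
      intro y hy hty
      rw [hF]
      simp only
      rw [intervalIntegral.integral_of_le hty]
      exact (setIntegral_congr_fun measurableSet_Ioc fun u hu =>
        (hgeq ⟨ht₁.1.trans hu.1.le, hu.2.trans hy.2⟩).symm)
    -- right propagation
    have hright : ∀ y ∈ Set.Icc a b, t₁ ≤ y → s y = 0 := by
      have hgr := norm_le_gronwallBound_of_norm_deriv_right_le (f := F) (f' := g)
        (δ := 0) (K := L) (ε := 0) (a := t₁) (b := b)
        (fun u _ => (hFd u).continuousAt.continuousWithinAt)
        (fun u _ => (hFd u).hasDerivWithinAt)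
        (by simp [hF])
        (fun u hu => by
          have hu' : u ∈ Set.Icc a b := ⟨ht₁.1.trans hu.1, hu.2.le⟩
          have h1 := hest t₁ ht₁ u hu' hu.1
          rw [hs₁, sub_zero, abs_of_nonneg (hnonneg u hu')] at h1
          have hFnn : 0 ≤ F u := by
            rw [hFeq u hu' hu.1]
            exact setIntegral_nonneg measurableSet_Ioc fun w hw =>
              hnonneg w ⟨ht₁.1.trans hw.1.le, hw.2.trans hu'.2⟩
          have hgu : g u = s u := (hgeq hu').symm
          show ‖g u‖ ≤ L * ‖F u‖ + 0
          rw [Real.norm_eq_abs, Real.norm_eq_abs, hgu, abs_of_nonneg (hnonneg u hu'),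
            abs_of_nonneg hFnn, add_zero, hFeq u hu' hu.1]
          exact h1)
      intro y hy hty
      have hFy := hgr y ⟨hty, hy.2⟩
      rw [gronwallBound_ε0, zero_mul] at hFy
      have hFy0 : F y = 0 := by
        have := norm_nonneg (F y); have := hFy; simp only [Real.norm_eq_abs] at *
        linarith [abs_nonneg (F y), le_abs_self (F y), neg_abs_le (F y)]
      have h1 := hest t₁ ht₁ y hy hty
      rw [hs₁, sub_zero, abs_of_nonneg (hnonneg y hy), ← hFeq y hy hty, hFy0, mul_zero] at h1
      exact le_antisymm h1 (hnonneg y hy)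
    -- left propagation
    have hleft : ∀ y ∈ Set.Icc a b, y ≤ t₁ → s y = 0 := by
      set V : ℝ → ℝ := fun u => -F (t₁ - u) with hV
      have hVd : ∀ u, HasDerivAt V (g (t₁ - u)) u := by
        intro u
        have h1 : HasDerivAt (fun y => -F y) (-(g (t₁ - u))) (t₁ - u) := (hFd _).neg
        have h2 : HasDerivAt (fun u : ℝ => t₁ - u) (-1) u := (hasDerivAt_id u).const_sub t₁
        have := h1.comp u h2
        exact this.congr_deriv (by ring)
      have hVeq : ∀ u ∈ Set.Icc (0:ℝ) (t₁ - a), V u = ∫ w in Set.Ioc (t₁ - u) t₁, s w := by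
        intro u hu
        have hmem : t₁ - u ∈ Set.Icc a b := ⟨by linarith [hu.2], by linarith [hu.1, ht₁.2]⟩
        rw [hV]
        simp only
        rw [hF]
        simp only
        rw [← intervalIntegral.integral_symm, intervalIntegral.integral_of_le (by linarith [hu.1])]
        exact (setIntegral_congr_fun measurableSet_Ioc fun w hw =>
          (hgeq ⟨hmem.1.trans hw.1.le, hw.2.trans ht₁.2⟩).symm)
      have hVnn : ∀ u ∈ Set.Icc (0:ℝ) (t₁ - a), 0 ≤ V u := by
        intro u hu
        rw [hVeq u hu]
        have hmem : t₁ - u ∈ Set.Icc a b := ⟨by linarith [hu.2], by linarith [hu.1, ht₁.2]⟩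
        exact setIntegral_nonneg measurableSet_Ioc fun w hw =>
          hnonneg w ⟨hmem.1.trans hw.1.le, hw.2.trans ht₁.2⟩
      have hgr := norm_le_gronwallBound_of_norm_deriv_right_le (f := V)
        (f' := fun u => g (t₁ - u)) (δ := 0) (K := L) (ε := 0) (a := 0) (b := t₁ - a)
        (fun u _ => (hVd u).continuousAt.continuousWithinAt)
        (fun u _ => (hVd u).hasDerivWithinAt)
        (by simp [hV, hF])
        (fun u hu => by
          have hu' : u ∈ Set.Icc (0:ℝ) (t₁ - a) := ⟨hu.1, hu.2.le⟩
          have hmem : t₁ - u ∈ Set.Icc a b := ⟨by linarith [hu'.2], by linarith [hu.1, ht₁.2]⟩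
          have h1 := hest (t₁ - u) hmem t₁ ht₁ (by linarith [hu.1])
          rw [hs₁, zero_sub, abs_neg, abs_of_nonneg (hnonneg _ hmem)] at h1
          have hgu : g (t₁ - u) = s (t₁ - u) := (hgeq hmem).symm
          show ‖g (t₁ - u)‖ ≤ L * ‖V u‖ + 0
          rw [Real.norm_eq_abs, Real.norm_eq_abs, hgu, abs_of_nonneg (hnonneg _ hmem),
            abs_of_nonneg (hVnn u hu'), add_zero, hVeq u hu']
          exact h1)
      intro y hy hty
      have hu : t₁ - y ∈ Set.Icc (0:ℝ) (t₁ - a) := ⟨by linarith, by linarith [hy.1]⟩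
      have hVy := hgr (t₁ - y) hu
      rw [gronwallBound_ε0, zero_mul] at hVy
      have hVy0 : V (t₁ - y) = 0 := le_antisymm (by
        have := le_abs_self (V (t₁ - y)); rw [Real.norm_eq_abs] at hVy; linarith)
        (hVnn _ hu)
      have h1 := hest y hy t₁ ht₁ hty
      rw [hs₁, zero_sub, abs_neg, abs_of_nonneg (hnonneg y hy)] at h1
      have h2 : V (t₁ - y) = ∫ w in Set.Ioc y t₁, s w := by
        have := hVeq (t₁ - y) hu
        simpa using this
      rw [← h2, hVy0, mul_zero] at h1
      exact le_antisymm h1 (hnonneg y hy)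
    rcases le_total t t₁ with h | h
    · exact hleft t ht h
    · exact hright t ht h
  -- dichotomy
  by_cases hzero : ∀ t ∈ Set.Icc a b, s t = 0
  · exact Or.inl hzero
  right
  push_neg at hzero
  obtain ⟨t₀, ht₀, hs₀⟩ := hzero
  have hpos : ∀ t ∈ Set.Icc a b, 0 < s t := by
    intro t ht
    rcases (hnonneg t ht).lt_or_eq with h | h
    · exact h
    · exact absurd (hzero_all ⟨t, ht, h.symm⟩ t₀ ht₀) hs₀
  refine ⟨hpos, ?_⟩
  -- minimum of s
  obtain ⟨tε, htε, hε⟩ := isCompact_Icc.exists_isMinOn (Set.nonempty_Icc.2 hab) hcont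
  set ε := s tε with hεdef
  have hεpos : 0 < ε := hpos tε htε
  have hεle : ∀ t ∈ Set.Icc a b, ε ≤ s t := fun t ht => hε ht
  -- 1/s is Lipschitz on Icc a b (with some constant)
  have hlip' : LipschitzOnWith (K * Real.toNNReal (ε⁻¹ * ε⁻¹)) (fun t => 1 / s t)
      (Set.Icc a b) := by
    rw [lipschitzOnWith_iff_dist_le_mul]
    intro x hx y hy
    have hsx := hpos x hx
    have hsy := hpos y hy
    have hεx := hεle x hx
    have hεy := hεle y hy
    simp only [Real.dist_eq]
    have h1 : (1:ℝ)/s x - 1/s y = (s y - s x) / (s x * s y) := by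
      field_simp
    rw [h1, abs_div, abs_mul, abs_of_pos hsx, abs_of_pos hsy]
    have hK : |s y - s x| ≤ K * |x - y| := by
      have h := hlip.dist_le_mul y hy x hx
      rw [Real.dist_eq, Real.dist_eq] at h
      calc |s y - s x| ≤ K * |y - x| := h
        _ = (K : ℝ) * |x - y| := by rw [abs_sub_comm]
    have hcoe : ((K * Real.toNNReal (ε⁻¹ * ε⁻¹) : NNReal) : ℝ) = K * (ε⁻¹ * ε⁻¹) := by
      push_cast [Real.coe_toNNReal _ (by positivity : (0:ℝ) ≤ ε⁻¹ * ε⁻¹)]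
      ring
    rw [hcoe, div_le_iff₀ (by positivity)]
    have hεε : ε * ε ≤ s x * s y :=
      mul_le_mul hεx hεy hεpos.le (hnonneg x hx)
    have hinv : 1 ≤ ε⁻¹ * ε⁻¹ * (s x * s y) := by
      rw [show ε⁻¹ * ε⁻¹ * (s x * s y) = (s x * s y) / (ε * ε) by field_simp]
      rw [le_div_iff₀ (by positivity)]
      linarith
    calc |s y - s x| ≤ (K : ℝ) * |x - y| := hK
      _ = (K : ℝ) * |x - y| * 1 := by ring
      _ ≤ (K : ℝ) * |x - y| * (ε⁻¹ * ε⁻¹ * (s x * s y)) := by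
          have : (0:ℝ) ≤ (K : ℝ) * |x - y| := by positivity
          nlinarith
      _ = (K : ℝ) * (ε⁻¹ * ε⁻¹) * |x - y| * (s x * s y) := by ring
  obtain ⟨f, hfl, hfeq⟩ := hlip'.extend_real
  -- canonical derivative choice for f
  set D' : ℝ → ℝ := fun t => if h : ∃ u, HasDerivAt f u t then h.choose else 0 with hD'
  have hD'spec : ∀ t, (∃ u, HasDerivAt f u t) → HasDerivAt f (D' t) t := by
    intro t h; rw [hD']; simp only [dif_pos h]; exact h.choose_spec
  have main : ∀ x ∈ Set.Icc a b, ∀ y ∈ Set.Icc a b, x ≤ y → |f y - f x| ≤ C * (y - x) := by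
    intro x hx y hy hxy
    have hae := hder' x y hx hy
    have hfd : ∀ᵐ t ∂(volume.restrict (Set.Ioc x y)),
        HasDerivAt f (D' t) t ∧ |D' t| ≤ C := by
      filter_upwards [hae] with t ht
      obtain ⟨htm, d, hd, hdb⟩ := ht
      have hnhds : Set.Icc a b ∈ nhds t := Icc_mem_nhds htm.1 htm.2
      have heqf : f =ᶠ[nhds t] (fun u => 1 / s u) :=
        Filter.eventuallyEq_of_mem hnhds fun u hu => (hfeq hu).symm
      have hst : 0 < s t := hpos t (Set.Ioo_subset_Icc_self htm)
      have hinv : HasDerivAt (fun u => 1 / s u) (-d / s t ^ 2) t := by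
        have h := hd.inv hst.ne'
        rw [show (fun u => 1 / s u) = fun u => (s u)⁻¹ from funext fun u => one_div _]
        exact h
      have hf' : HasDerivAt f (-d / s t ^ 2) t := by
        exact hinv.congr_of_eventuallyEq heqf
      have hDeq : D' t = -d / s t ^ 2 := (hD'spec t ⟨_, hf'⟩).unique hf'
      refine ⟨hDeq ▸ hD'spec t ⟨_, hf'⟩, ?_⟩
      rw [hDeq, abs_div, abs_neg, abs_of_pos (by positivity : (0:ℝ) < s t ^ 2)]
      rw [div_le_iff₀ (by positivity)]
      calc |d| ≤ C * s t ^ 2 := hdb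
        _ = C * s t ^ 2 := rfl
    have heq2 := lip_ftc hfl hxy (hfd.mono fun t ht => ht.1)
    have h1 : ‖∫ t in Set.Ioc x y, D' t‖ ≤ ∫ t in Set.Ioc x y, C := by
      apply norm_integral_le_of_norm_le (integrableOn_const measure_Ioc_lt_top.ne)
      filter_upwards [hfd] with t ht
      rw [Real.norm_eq_abs]; exact ht.2
    rw [setIntegral_const, measureReal_def, Real.volume_Ioc, ENNReal.toReal_ofReal (sub_nonneg.2 hxy),
      smul_eq_mul, mul_comm] at h1
    rw [heq2, ← Real.norm_eq_abs]
    exact h1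
  rw [lipschitzOnWith_iff_dist_le_mul]
  intro x hx y hy
  have hC' : (C.toNNReal : ℝ) = C := Real.coe_toNNReal C hC.le
  simp only [Real.dist_eq, hC']
  have hfx : 1 / s x = f x := hfeq hx
  have hfy : 1 / s y = f y := hfeq hy
  rcases le_total x y with h | h
  · calc |1 / s x - 1 / s y| = |f y - f x| := by rw [hfx, hfy, abs_sub_comm]
      _ ≤ C * (y - x) := main x hx y hy h
      _ = C * |x - y| := by rw [abs_sub_comm, abs_of_nonneg (sub_nonneg.2 h)]
  · calc |1 / s x - 1 / s y| = |f x - f y| := by rw [hfx, hfy]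
      _ ≤ C * (x - y) := main y hy x hx h
      _ = C * |x - y| := by rw [abs_of_nonneg (sub_nonneg.2 h)]
end

section
/- Let γ : [a,b] → ℝ^n be a C^{1,1} curve satisfying ‖γ''(t)‖ ≤ C·‖γ'(t)‖² for almost all t, where C > 0. Then for all t in [a,b], ‖γ'(t)‖ ≤ (e^{Cr} − 1)/(C·(b−a)), where r = ∫_a^b ‖γ'(t)‖ dt is the Euclidean length of γ. -/
open MeasureTheory Set Filter intervalIntegral Topology

lemma abs_slope_le_of_lip {f : ℝ → ℝ} {K : NNReal} (hf : LipschitzWith K f) (t s : ℝ) :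
    |slope f t s| ≤ K := by
  rcases eq_or_ne s t with rfl | hne
  · simp [slope_def_field]
  · have h1 : |f s - f t| ≤ K * |s - t| := by
      simpa [Real.dist_eq] using hf.dist_le_mul s t
    rw [slope_def_field, abs_div]
    rw [div_le_iff₀ (by simp [sub_ne_zero.2 hne])]
    exact h1

lemma lip_abs_deriv_le {f : ℝ → ℝ} {K : NNReal} (hf : LipschitzWith K f) (t : ℝ) :
    |deriv f t| ≤ K := by
  by_cases h : DifferentiableAt ℝ f t
  · have hs : Tendsto (fun s => |slope f t s|) (𝓝[≠] t) (𝓝 |deriv f t|) :=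
      (hasDerivAt_iff_tendsto_slope.1 h.hasDerivAt).abs
    exact le_of_tendsto hs (Filter.Eventually.of_forall fun s => abs_slope_le_of_lip hf t s)
  · rw [deriv_zero_of_not_differentiableAt h]; simp

lemma lip_ftc_s8 {f : ℝ → ℝ} {K : NNReal} (hf : LipschitzWith K f) (x y : ℝ) :
    ∫ t in x..y, deriv f t = f y - f x := by
  have hc : Continuous f := hf.continuous
  set h : ℕ → ℝ := fun n => ((n : ℝ) + 1)⁻¹ with hh
  have hpos : ∀ n, 0 < h n := fun n => by positivity
  have hlim : Tendsto h atTop (𝓝 0) := by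
    simpa [hh, one_div] using tendsto_one_div_add_atTop_nhds_zero_nat (𝕜 := ℝ)
  set F : ℕ → ℝ → ℝ := fun n t => (f (t + h n) - f t) / h n with hF
  -- slope representation
  have hFslope : ∀ n t, F n t = slope f t (t + h n) := by
    intro n t
    rw [slope_def_field]
    simp [hF]
  -- pointwise limit a.e.
  have hae : ∀ᵐ t : ℝ, t ∈ Set.uIoc x y → Tendsto (fun n => F n t) atTop (𝓝 (deriv f t)) := by
    have h1 : ∀ᵐ t : ℝ, DifferentiableAt ℝ f t := hf.ae_differentiableAt_real
    filter_upwards [h1] with t ht _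
    have hs : Tendsto (slope f t) (𝓝[≠] t) (𝓝 (deriv f t)) :=
      hasDerivAt_iff_tendsto_slope.1 ht.hasDerivAt
    have htt : Tendsto (fun n => t + h n) atTop (𝓝[≠] t) := by
      apply tendsto_nhdsWithin_of_tendsto_nhds_of_eventually_within
      · simpa using (tendsto_const_nhds.add hlim)
      · exact Filter.Eventually.of_forall fun n => by
          simp only [Set.mem_compl_iff, Set.mem_singleton_iff]
          intro hcontra
          have := hpos n
          nlinarith [hcontra]
    simpa [hFslope, Function.comp_def] using hs.comp htt
  -- dominated convergence
  have hA : Tendsto (fun n => ∫ t in x..y, F n t) atTop (𝓝 (∫ t in x..y, deriv f t)) := by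
    apply intervalIntegral.tendsto_integral_filter_of_dominated_convergence (fun _ => (K : ℝ))
    · exact Filter.Eventually.of_forall fun n =>
        ((hc.comp (continuous_id.add continuous_const)).sub hc).div_const _
          |>.aestronglyMeasurable
    · refine Filter.Eventually.of_forall fun n => Filter.Eventually.of_forall fun t _ => ?_
      rw [Real.norm_eq_abs, hFslope]
      exact abs_slope_le_of_lip hf t _
    · exact intervalIntegrable_const
    · exact hae
  -- explicit formula for each n
  have hB : ∀ n, ∫ t in x..y, F n t
      = ((∫ u in y..(y + h n), f u) - ∫ u in x..(x + h n), f u) / h n := by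
    intro n
    have hint : ∀ p q : ℝ, IntervalIntegrable f volume p q := fun p q => hc.intervalIntegrable p q
    have e1 : ∫ t in x..y, F n t = ((∫ t in x..y, f (t + h n)) - ∫ t in x..y, f t) / h n := by
      simp only [hF, div_eq_mul_inv]
      rw [intervalIntegral.integral_mul_const, intervalIntegral.integral_sub]
      · exact (hc.comp (continuous_id.add continuous_const)).intervalIntegrable x y
      · exact hint x y
    have e2 : ∫ t in x..y, f (t + h n) = ∫ u in (x + h n)..(y + h n), f u :=
      intervalIntegral.integral_comp_add_right (fun u => f u) (h n)
    have e3 : (∫ u in x..y, f u) + ∫ u in y..(y + h n), f u = ∫ u in x..(y + h n), f u :=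
      intervalIntegral.integral_add_adjacent_intervals (hint _ _) (hint _ _)
    have e4 : (∫ u in x..(x + h n), f u) + ∫ u in (x + h n)..(y + h n), f u
        = ∫ u in x..(y + h n), f u :=
      intervalIntegral.integral_add_adjacent_intervals (hint _ _) (hint _ _)
    rw [e1, e2]
    congr 1
    linarith [e3, e4]
  -- limits of boundary terms
  have hbd : ∀ z : ℝ, Tendsto (fun n => (∫ u in z..(z + h n), f u) / h n) atTop (𝓝 (f z)) := by
    intro z
    have hG : HasDerivAt (fun u => ∫ s in z..u, f s) (f z) z :=
      intervalIntegral.integral_hasDerivAt_right (hc.intervalIntegrable z z)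
        (hc.stronglyMeasurableAtFilter volume (𝓝 z)) hc.continuousAt
    have hs := hasDerivAt_iff_tendsto_slope.1 hG
    have htt : Tendsto (fun n => z + h n) atTop (𝓝[≠] z) := by
      apply tendsto_nhdsWithin_of_tendsto_nhds_of_eventually_within
      · simpa using (tendsto_const_nhds.add hlim)
      · exact Filter.Eventually.of_forall fun n => by
          simp only [Set.mem_compl_iff, Set.mem_singleton_iff]
          intro hcontra; have := hpos n; nlinarith [hcontra]
    have := hs.comp htt
    simp only [Function.comp_def, slope_def_field] at this
    simpa [intervalIntegral.integral_same] using this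
  have hC : Tendsto (fun n => ∫ t in x..y, F n t) atTop (𝓝 (f y - f x)) := by
    have := (hbd y).sub (hbd x)
    apply this.congr
    intro n
    rw [hB n, sub_div]
  exact tendsto_nhds_unique hA hC

lemma lip_sub_le {f : ℝ → ℝ} {K : NNReal} (hf : LipschitzWith K f) {x y B : ℝ} (hxy : x ≤ y)
    (hB : ∀ᵐ t : ℝ, t ∈ Set.Ioo x y → |deriv f t| ≤ B) :
    |f y - f x| ≤ B * (y - x) := by
  rw [← lip_ftc_s8 hf x y]
  have hmeas : Measurable (deriv f) := measurable_deriv f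
  have hint : IntervalIntegrable (deriv f) volume x y := by
    rw [intervalIntegrable_iff]
    refine Integrable.mono' (g := fun _ => (K:ℝ)) (integrableOn_const measure_Ioc_lt_top.ne) hmeas.aestronglyMeasurable ?_
    · exact Filter.Eventually.of_forall fun t => by
        simpa [Real.norm_eq_abs] using lip_abs_deriv_le hf t
  have habs : |∫ t in x..y, deriv f t| ≤ ∫ t in x..y, |deriv f t| :=
    intervalIntegral.abs_integral_le_integral_abs hxy
  refine habs.trans ?_
  have hmono : (∫ t in x..y, |deriv f t|) ≤ ∫ _t in x..y, B := by
    apply intervalIntegral.integral_mono_ae_restrict hxy hint.abs intervalIntegrable_const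
    have hIoo : volume.restrict (Set.Icc x y) = volume.restrict (Set.Ioo x y) :=
      (Measure.restrict_congr_set Ioo_ae_eq_Icc).symm
    rw [hIoo]
    exact (ae_restrict_iff' measurableSet_Ioo).2 hB
  simpa [mul_comm] using hmono

lemma recip_bound {v : ℝ → ℝ} {K : NNReal} {C x y : ℝ} (hxy : x ≤ y)
    (hv : LipschitzWith K v)
    (hd : ∀ᵐ t : ℝ, t ∈ Set.Ioo x y → DifferentiableAt ℝ v t ∧ |deriv v t| ≤ C * (v t) ^ 2)
    (hpos : ∀ s ∈ Set.Icc x y, 0 < v s) :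
    |(v y)⁻¹ - (v x)⁻¹| ≤ C * (y - x) := by
  obtain ⟨m, hm, hmin⟩ := isCompact_Icc.exists_isMinOn (Set.nonempty_Icc.2 hxy)
    (hv.continuous.continuousOn)
  set δ : ℝ := v m with hδdef
  have hδ : 0 < δ := hpos m hm
  set w : ℝ → ℝ := fun s => (max (v s) δ)⁻¹ with hw
  -- w is Lipschitz
  have hKw : LipschitzWith (K * (δ⁻¹).toNNReal * (δ⁻¹).toNNReal) w := by
    apply LipschitzWith.of_dist_le_mul
    intro s t
    have hA : δ ≤ max (v s) δ := le_max_right _ _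
    have hB : δ ≤ max (v t) δ := le_max_right _ _
    have hA0 : 0 < max (v s) δ := hδ.trans_le hA
    have hB0 : 0 < max (v t) δ := hδ.trans_le hB
    have h1 : |max (v t) δ - max (v s) δ| ≤ |v t - v s| := abs_max_sub_max_le_abs _ _ _
    have h2 : |v t - v s| ≤ K * |t - s| := by
      simpa [Real.dist_eq] using hv.dist_le_mul t s
    have key : dist (w s) (w t) = |max (v t) δ - max (v s) δ| / (max (v s) δ * max (v t) δ) := by
      rw [Real.dist_eq, hw]
      rw [inv_sub_inv hA0.ne' hB0.ne', abs_div, abs_of_pos (mul_pos hA0 hB0)]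
    rw [key]
    have hcoe : ((K * (δ⁻¹).toNNReal * (δ⁻¹).toNNReal : NNReal) : ℝ)
        = K * δ⁻¹ * δ⁻¹ := by
      rw [NNReal.coe_mul, NNReal.coe_mul, Real.coe_toNNReal _ (by positivity)]
    rw [hcoe, Real.dist_eq]
    rw [div_le_iff₀ (by positivity)]
    have hts : |v t - v s| ≤ K * |s - t| := by rwa [abs_sub_comm s t]
    calc |max (v t) δ - max (v s) δ| ≤ K * |s - t| := h1.trans hts
      _ = K * |s - t| * (δ⁻¹ * δ⁻¹) * (δ * δ) := by
          field_simp
      _ ≤ K * |s - t| * (δ⁻¹ * δ⁻¹) * (max (v s) δ * max (v t) δ) := by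
          apply mul_le_mul_of_nonneg_left (by nlinarith) (by positivity)
      _ = ↑K * δ⁻¹ * δ⁻¹ * |s - t| * (max (v s) δ * max (v t) δ) := by ring
  -- derivative bound for w a.e.
  have hdw : ∀ᵐ t : ℝ, t ∈ Set.Ioo x y → |deriv w t| ≤ C := by
    filter_upwards [hd] with t hdt hmem
    obtain ⟨hdiff, hb⟩ := hdt hmem
    have hvt : 0 < v t := hpos t (Set.Ioo_subset_Icc_self hmem)
    have hloc : w =ᶠ[nhds t] fun s => (v s)⁻¹ := by
      filter_upwards [isOpen_Ioo.mem_nhds hmem] with s hs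
      have : δ ≤ v s := hmin (Set.Ioo_subset_Icc_self hs)
      simp [hw, max_eq_left this]
    have hD : HasDerivAt (fun s => (v s)⁻¹) (-deriv v t / (v t) ^ 2) t :=
      hdiff.hasDerivAt.inv hvt.ne'
    have hW : HasDerivAt w (-deriv v t / (v t) ^ 2) t := hD.congr_of_eventuallyEq hloc
    rw [hW.deriv]
    rw [abs_div, abs_neg, abs_of_pos (by positivity : (0:ℝ) < (v t) ^ 2)]
    rw [div_le_iff₀ (by positivity)]
    calc |deriv v t| ≤ C * (v t) ^ 2 := hb
      _ = C * (v t) ^ 2 := rfl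
  -- conclude
  have := lip_sub_le hKw hxy hdw
  have hy' : δ ≤ v y := hmin (Set.right_mem_Icc.2 hxy)
  have hx' : δ ≤ v x := hmin (Set.left_mem_Icc.2 hxy)
  have hwy : w y = (v y)⁻¹ := by simp [hw, max_eq_left hy']
  have hwx : w x = (v x)⁻¹ := by simp [hw, max_eq_left hx']
  rwa [hwy, hwx] at this

set_option maxHeartbeats 1000000 in
/-- If a `C^{1,1}` curve `γ : [a,b] → ℝ^n` satisfies `‖γ''‖ ≤ C‖γ'‖²` a.e., then
`‖γ'(t)‖ ≤ (e^{Cr} − 1)/(C(b−a))` for all `t`, where `r` is the Euclidean length. -/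
theorem velocity_bound_via_length {n : ℕ} {a b C : ℝ} (hab : a < b) (hC : 0 < C)
    (γ γ' γ'' : ℝ → EuclideanSpace ℝ (Fin n)) {K : NNReal}
    (hder : ∀ t ∈ Set.Icc a b, HasDerivAt γ (γ' t) t)
    (hlip : LipschitzOnWith K γ' (Set.Icc a b))
    (hder2 : ∀ᵐ t ∂(volume.restrict (Set.Icc a b)),
      HasDerivAt γ' (γ'' t) t ∧ ‖γ'' t‖ ≤ C * ‖γ' t‖ ^ 2) :
    ∀ t ∈ Set.Icc a b,
      ‖γ' t‖ ≤ (Real.exp (C * ∫ s in a..b, ‖γ' s‖) - 1) / (C * (b - a)) := by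
  intro t ht
  have hvlipOn : LipschitzOnWith K (fun s => ‖γ' s‖) (Set.Icc a b) := by
    have := lipschitzWith_one_norm.comp_lipschitzOnWith hlip
    rwa [one_mul] at this
  obtain ⟨w, hwlip, hweq⟩ := hvlipOn.extend_real
  have hder2' : ∀ᵐ s : ℝ, s ∈ Set.Icc a b →
      (HasDerivAt γ' (γ'' s) s ∧ ‖γ'' s‖ ≤ C * ‖γ' s‖ ^ 2) :=
    (ae_restrict_iff' measurableSet_Icc).1 hder2
  -- derivative bound for the extension w
  have hw_ae : ∀ᵐ s : ℝ, s ∈ Set.Ioo a b →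
      DifferentiableAt ℝ w s ∧ |deriv w s| ≤ C * (w s) ^ 2 := by
    filter_upwards [hder2', hwlip.ae_differentiableAt_real] with s h1 h2 hs
    have hsIcc := Set.Ioo_subset_Icc_self hs
    obtain ⟨hγd, hγb⟩ := h1 hsIcc
    refine ⟨h2, ?_⟩
    have hws : w s = ‖γ' s‖ := (hweq hsIcc).symm
    have habs : |deriv w s| ≤ ‖γ'' s‖ := by
      have hsl : Tendsto (fun u => |slope w s u|) (𝓝[≠] s) (𝓝 |deriv w s|) :=
        (hasDerivAt_iff_tendsto_slope.1 h2.hasDerivAt).abs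
      have hsl2 : Tendsto (fun u => ‖slope γ' s u‖) (𝓝[≠] s) (𝓝 ‖γ'' s‖) :=
        (hasDerivAt_iff_tendsto_slope.1 hγd).norm
      refine le_of_tendsto_of_tendsto hsl hsl2 ?_
      have hIoo : Set.Ioo a b ∈ 𝓝[≠] s :=
        mem_nhdsWithin_of_mem_nhds (isOpen_Ioo.mem_nhds hs)
      filter_upwards [hIoo, self_mem_nhdsWithin] with u hu hne
      have huIcc := Set.Ioo_subset_Icc_self hu
      have hne' : u - s ≠ 0 := sub_ne_zero.2 hne
      have e1 : slope w s u = (‖γ' u‖ - ‖γ' s‖) / (u - s) := by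
        rw [slope_def_field, ← hweq huIcc, ← hweq hsIcc]
      have e2 : ‖slope γ' s u‖ = ‖γ' u - γ' s‖ / |u - s| := by
        rw [slope, norm_smul, norm_inv, Real.norm_eq_abs, vsub_eq_sub, div_eq_inv_mul]
      rw [e1, e2, abs_div]
      gcongr
      calc |‖γ' u‖ - ‖γ' s‖| ≤ ‖γ' u - γ' s‖ := abs_norm_sub_norm_le _ _
        _ ≤ _ := le_rfl
    rw [hws]
    exact habs.trans hγb
  -- key pointwise lower bound
  have key : ∀ s ∈ Set.Icc a b,
      ‖γ' t‖ / (1 + C * ‖γ' t‖ * |s - t|) ≤ ‖γ' s‖ := by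
    intro s hs
    have hεbound : ∀ ε : ℝ, 0 < ε →
        (‖γ' t‖ + ε) / (1 + C * (‖γ' t‖ + ε) * |s - t|) ≤ ‖γ' s‖ + ε := by
      intro ε hε
      set wε : ℝ → ℝ := fun u => w u + ε with hwε
      have hlipε : LipschitzWith K wε := by
        apply LipschitzWith.of_dist_le_mul
        intro p q
        simpa [hwε, Real.dist_eq] using hwlip.dist_le_mul p q
      have hdε : ∀ᵐ u : ℝ, u ∈ Set.Ioo a b →
          DifferentiableAt ℝ wε u ∧ |deriv wε u| ≤ C * (wε u) ^ 2 := by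
        filter_upwards [hw_ae] with u hu huin
        obtain ⟨h2, hb⟩ := hu huin
        have hder' : HasDerivAt wε (deriv w u) u := h2.hasDerivAt.add_const ε
        refine ⟨hder'.differentiableAt, ?_⟩
        rw [hder'.deriv]
        refine hb.trans ?_
        simp only [hwε]
        have hw0 : 0 ≤ w u := by
          rw [← hweq (Set.Ioo_subset_Icc_self huin)]; exact norm_nonneg _
        have h2' : (w u) ^ 2 ≤ (w u + ε) ^ 2 := by nlinarith
        exact mul_le_mul_of_nonneg_left h2' hC.le
      have hposε : ∀ u ∈ Set.Icc a b, 0 < wε u := by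
        intro u hu
        have : 0 ≤ w u := by rw [← hweq hu]; exact norm_nonneg _
        simp only [hwε]; linarith
      -- apply recip_bound on the interval between t and s
      have hrec : (wε s)⁻¹ ≤ (wε t)⁻¹ + C * |s - t| := by
        rcases le_total t s with hts | hst
        · have h7 := recip_bound hts hlipε
            (by filter_upwards [hdε] with u hu huin;
                exact hu (Set.Ioo_subset_Ioo ht.1 hs.2 huin))
            (fun u hu => hposε u (Set.Icc_subset_Icc ht.1 hs.2 hu))
          rw [abs_of_nonneg (sub_nonneg.2 hts)]
          have := abs_le.1 h7
          linarith [this.2]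
        · have h7 := recip_bound hst hlipε
            (by filter_upwards [hdε] with u hu huin;
                exact hu (Set.Ioo_subset_Ioo hs.1 ht.2 huin))
            (fun u hu => hposε u (Set.Icc_subset_Icc hs.1 ht.2 hu))
          rw [abs_of_nonpos (sub_nonpos.2 hst), neg_sub]
          have := abs_le.1 h7
          linarith [this.1]
      -- algebra
      have hws' : wε s = ‖γ' s‖ + ε := by simp only [hwε, ← hweq hs]
      have hwt' : wε t = ‖γ' t‖ + ε := by simp only [hwε, ← hweq ht]
      rw [hws', hwt'] at hrec
      set p := ‖γ' t‖ + ε with hp'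
      set q := ‖γ' s‖ + ε with hq'
      have hp : 0 < p := by have := norm_nonneg (γ' t); simp only [hp']; linarith
      have hq : 0 < q := by have := norm_nonneg (γ' s); simp only [hq']; linarith
      have hD : 0 ≤ |s - t| := abs_nonneg _
      rw [div_le_iff₀ (by positivity)]
      have h8 : q⁻¹ * (q * p) ≤ (p⁻¹ + C * |s - t|) * (q * p) :=
        mul_le_mul_of_nonneg_right hrec (by positivity)
      have h9 : q⁻¹ * (q * p) = p := by field_simp
      have h10 : (p⁻¹ + C * |s - t|) * (q * p) = q + C * |s - t| * q * p := by
        field_simp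
      rw [h9, h10] at h8
      nlinarith
    have h1 : Tendsto (fun ε => (‖γ' t‖ + ε) / (1 + C * (‖γ' t‖ + ε) * |s - t|)) (𝓝[>] (0:ℝ))
        (𝓝 (‖γ' t‖ / (1 + C * ‖γ' t‖ * |s - t|))) := by
      have hden : Continuous fun ε : ℝ => 1 + C * (‖γ' t‖ + ε) * |s - t| := by continuity
      have hnum : Continuous fun ε : ℝ => ‖γ' t‖ + ε := by continuity
      have hne0 : (1 + C * (‖γ' t‖ + (0:ℝ)) * |s - t|) ≠ 0 := by positivity
      have hcont := (hnum.continuousAt (x := 0)).div (hden.continuousAt) hne0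
      simpa [Pi.div_def] using hcont.tendsto.mono_left nhdsWithin_le_nhds
    have h2 : Tendsto (fun ε : ℝ => ‖γ' s‖ + ε) (𝓝[>] (0:ℝ)) (𝓝 (‖γ' s‖)) := by
      have : ContinuousAt (fun ε : ℝ => ‖γ' s‖ + ε) 0 := continuousAt_const.add continuousAt_id
      simpa using this.tendsto.mono_left nhdsWithin_le_nhds
    exact le_of_tendsto_of_tendsto h1 h2
      (eventually_nhdsWithin_of_forall fun ε hε => hεbound ε hε)
  -- conclusion
  rcases eq_or_lt_of_le (norm_nonneg (γ' t)) with h0 | hvt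
  · rw [← h0]
    have hr0 : 0 ≤ ∫ s in a..b, ‖γ' s‖ :=
      intervalIntegral.integral_nonneg hab.le fun u _ => norm_nonneg _
    have h1 : (1:ℝ) ≤ Real.exp (C * ∫ s in a..b, ‖γ' s‖) := by
      rw [← Real.exp_zero]; exact Real.exp_le_exp.2 (by positivity)
    have hba : (0:ℝ) < b - a := by linarith
    exact div_nonneg (by linarith) (by positivity)
  · set k := ‖γ' t‖ with hk
    have hvcont : ContinuousOn (fun s => ‖γ' s‖) (Set.Icc a b) := hvlipOn.continuousOn
    have hint_v : IntervalIntegrable (fun s => ‖γ' s‖) volume a b := by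
      apply ContinuousOn.intervalIntegrable; rwa [Set.uIcc_of_le hab.le]
    have hgcont : Continuous fun s => k / (1 + C * k * |s - t|) := by
      apply Continuous.div continuous_const
      · exact continuous_const.add
          (continuous_const.mul ((continuous_id.sub continuous_const).abs))
      · intro u; positivity
    have hint_g : ∀ p q : ℝ, IntervalIntegrable (fun s => k / (1 + C * k * |s - t|)) volume p q :=
      fun p q => hgcont.intervalIntegrable p q
    have hmono : (∫ s in a..b, k / (1 + C * k * |s - t|)) ≤ ∫ s in a..b, ‖γ' s‖ :=
      intervalIntegral.integral_mono_on hab.le (hint_g a b) hint_v key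
    have hsplit : (∫ s in a..b, k / (1 + C * k * |s - t|)) =
        (∫ s in a..t, k / (1 + C * k * |s - t|)) + ∫ s in t..b, k / (1 + C * k * |s - t|) :=
      (intervalIntegral.integral_add_adjacent_intervals (hint_g a t) (hint_g t b)).symm
    have hleft : (∫ s in a..t, k / (1 + C * k * |s - t|))
        = C⁻¹ * Real.log (1 + C * k * (t - a)) := by
      have hco : ∀ s ∈ Set.uIcc a t, HasDerivAt (fun u => -C⁻¹ * Real.log (1 + C * k * (t - u)))
          (k / (1 + C * k * |s - t|)) s := by
        intro s hsm
        rw [Set.uIcc_of_le ht.1] at hsm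
        have hpos : 0 < 1 + C * k * (t - s) := by
          nlinarith [mul_nonneg (mul_nonneg hC.le hvt.le) (sub_nonneg.2 hsm.2)]
        have hd0 : HasDerivAt (fun u : ℝ => t - u) (-1) s := (hasDerivAt_id s).const_sub t
        have hd1 : HasDerivAt (fun u : ℝ => 1 + C * k * (t - u)) (-(C * k)) s := by
          simpa using ((hd0.const_mul (C * k)).const_add 1)
        have hd2 := hd1.log hpos.ne'
        have hd3 := hd2.const_mul (-C⁻¹)
        refine hd3.congr_deriv ?_
        rw [abs_of_nonpos (by linarith [hsm.2] : s - t ≤ 0), neg_sub]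
        field_simp
      have hfin := intervalIntegral.integral_eq_sub_of_hasDerivAt hco (hint_g a t)
      rw [hfin]
      simp [Real.log_one]
    have hright : (∫ s in t..b, k / (1 + C * k * |s - t|))
        = C⁻¹ * Real.log (1 + C * k * (b - t)) := by
      have hco : ∀ s ∈ Set.uIcc t b, HasDerivAt (fun u => C⁻¹ * Real.log (1 + C * k * (u - t)))
          (k / (1 + C * k * |s - t|)) s := by
        intro s hsm
        rw [Set.uIcc_of_le ht.2] at hsm
        have hpos : 0 < 1 + C * k * (s - t) := by
          nlinarith [mul_nonneg (mul_nonneg hC.le hvt.le) (sub_nonneg.2 hsm.1)]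
        have hd0 : HasDerivAt (fun u : ℝ => u - t) 1 s := (hasDerivAt_id s).sub_const t
        have hd1 : HasDerivAt (fun u : ℝ => 1 + C * k * (u - t)) (C * k) s := by
          simpa using ((hd0.const_mul (C * k)).const_add 1)
        have hd2 := hd1.log hpos.ne'
        have hd3 := hd2.const_mul (C⁻¹ : ℝ)
        refine hd3.congr_deriv ?_
        rw [abs_of_nonneg (by linarith [hsm.1] : (0:ℝ) ≤ s - t)]
        field_simp
      have hfin := intervalIntegral.integral_eq_sub_of_hasDerivAt hco (hint_g t b)
      rw [hfin]
      simp [Real.log_one]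
    set α := C * k * (t - a) with hα
    set β := C * k * (b - t) with hβ
    have hα0 : 0 ≤ α := mul_nonneg (mul_nonneg hC.le hvt.le) (sub_nonneg.2 ht.1)
    have hβ0 : 0 ≤ β := mul_nonneg (mul_nonneg hC.le hvt.le) (sub_nonneg.2 ht.2)
    have hlogsum : Real.log (1 + α) + Real.log (1 + β) ≤ C * ∫ s in a..b, ‖γ' s‖ := by
      have h1 : C⁻¹ * Real.log (1 + α) + C⁻¹ * Real.log (1 + β) ≤ ∫ s in a..b, ‖γ' s‖ := by
        rw [← hleft, ← hright, ← hsplit]; exact hmono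
      have := mul_le_mul_of_nonneg_left h1 hC.le
      calc Real.log (1 + α) + Real.log (1 + β)
          = C * (C⁻¹ * Real.log (1 + α) + C⁻¹ * Real.log (1 + β)) := by
            field_simp
        _ ≤ C * ∫ s in a..b, ‖γ' s‖ := this
    have hprod : (1 + α) * (1 + β) ≤ Real.exp (C * ∫ s in a..b, ‖γ' s‖) := by
      have hp1 : (0:ℝ) < 1 + α := by linarith
      have hp2 : (0:ℝ) < 1 + β := by linarith
      have : Real.log ((1 + α) * (1 + β)) ≤ C * ∫ s in a..b, ‖γ' s‖ := by
        rw [Real.log_mul hp1.ne' hp2.ne']; exact hlogsum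
      calc (1 + α) * (1 + β) = Real.exp (Real.log ((1 + α) * (1 + β))) :=
            (Real.exp_log (mul_pos hp1 hp2)).symm
        _ ≤ _ := Real.exp_le_exp.2 this
    have hexpand : 1 + C * k * (b - a) ≤ (1 + α) * (1 + β) := by
      have hsum' : α + β = C * k * (b - a) := by simp only [hα, hβ]; ring
      have hmul : (1 + α) * (1 + β) = 1 + (α + β) + α * β := by ring
      rw [hmul, hsum']
      linarith [mul_nonneg hα0 hβ0]
    have hCba : (0:ℝ) < C * (b - a) := mul_pos hC (by linarith)
    rw [le_div_iff₀ hCba]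
    have hring : k * (C * (b - a)) = C * k * (b - a) := by ring
    linarith [hprod, hexpand, hring]
end

section
/- Let v : [0,h] → ℝ^n be C¹ with v(0) = v(h) = 0, and suppose ∫₀^h ‖v'(t)‖² dt ≤ C₂·∫₀^h (‖v(t)‖ + t·‖v'(t)‖) dt for some constant C₂ > 0. Then ∫₀^h ‖v'(t)‖² dt ≤ (4/3)·C₂²·h³, and consequently max_{t∈[0,h]} ‖v(t)‖ ≤ 2·C₂·h². -/
open MeasureTheory intervalIntegral

/-- Cauchy–Schwarz for interval integrals of continuous functions. -/
lemma my_cauchy_schwarz {f g : ℝ → ℝ} (hf : Continuous f) (hg : Continuous g) {a b : ℝ}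
    (hab : a ≤ b) :
    (∫ t in a..b, f t * g t) ^ 2 ≤ (∫ t in a..b, f t ^ 2) * (∫ t in a..b, g t ^ 2) := by
  set A := ∫ t in a..b, f t ^ 2 with hA
  set B := ∫ t in a..b, f t * g t with hB
  set C := ∫ t in a..b, g t ^ 2 with hC
  have key : ∀ x : ℝ, 0 ≤ C * (x * x) + (2 * B) * x + A := by
    intro x
    have h0 : 0 ≤ ∫ t in a..b, (f t + x * g t) ^ 2 :=
      intervalIntegral.integral_nonneg hab fun t _ => sq_nonneg _
    have hexp : (∫ t in a..b, (f t + x * g t) ^ 2)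
        = C * (x * x) + (2 * B) * x + A := by
      have heq : ∀ t, (f t + x * g t) ^ 2
          = ((x * x) * g t ^ 2 + (2 * x) * (f t * g t)) + f t ^ 2 := by
        intro t; ring
      simp_rw [heq]
      rw [intervalIntegral.integral_add, intervalIntegral.integral_add,
        intervalIntegral.integral_const_mul, intervalIntegral.integral_const_mul]
      · ring
      · exact (continuous_const.mul (hg.pow 2)).intervalIntegrable a b
      · exact (continuous_const.mul (hf.mul hg)).intervalIntegrable a b
      · exact ((continuous_const.mul (hg.pow 2)).add
          (continuous_const.mul (hf.mul hg))).intervalIntegrable a b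
      · exact (hf.pow 2).intervalIntegrable a b
    rw [hexp] at h0
    exact h0
  have hdis := discrim_le_zero key
  rw [discrim] at hdis
  nlinarith [hdis]

/-- If `v : [0,h] → ℝ^n` is `C¹` with `v(0) = v(h) = 0` and
`∫‖v'‖² ≤ C₂ ∫(‖v‖ + t‖v'‖)`, then `∫‖v'‖² ≤ (4/3)C₂²h³` and `‖v(t)‖ ≤ 2C₂h²`. -/
theorem integral_bootstrap {n : ℕ} {h C₂ : ℝ} (hh : 0 < h) (hC₂ : 0 < C₂)
    (v v' : ℝ → EuclideanSpace ℝ (Fin n))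
    (hder : ∀ t ∈ Set.Icc 0 h, HasDerivAt v (v' t) t)
    (hcont : ContinuousOn v' (Set.Icc 0 h))
    (hv0 : v 0 = 0) (hvh : v h = 0)
    (hineq : ∫ t in (0:ℝ)..h, ‖v' t‖ ^ 2 ≤
      C₂ * ∫ t in (0:ℝ)..h, (‖v t‖ + t * ‖v' t‖)) :
    (∫ t in (0:ℝ)..h, ‖v' t‖ ^ 2 ≤ (4 / 3) * C₂ ^ 2 * h ^ 3) ∧
      ∀ t ∈ Set.Icc 0 h, ‖v t‖ ≤ 2 * C₂ * h ^ 2 := by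
  have huIcc : Set.uIcc (0:ℝ) h = Set.Icc 0 h := Set.uIcc_of_le hh.le
  -- clamp function
  set c : ℝ → ℝ := fun t => max 0 (min t h) with hc
  have hcmem : ∀ t, c t ∈ Set.Icc 0 h := fun t =>
    ⟨le_max_left _ _, max_le hh.le (min_le_right _ _)⟩
  have hccont : Continuous c := continuous_const.max (continuous_id.min continuous_const)
  have hcid : ∀ t ∈ Set.Icc 0 h, c t = t := fun t ht => by
    simp only [hc, min_eq_left ht.2, max_eq_right ht.1]
  -- extended (continuous on all of ℝ) norm of derivative
  set w : ℝ → ℝ := fun t => ‖v' (c t)‖ with hw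
  have hwcont : Continuous w := (hcont.comp_continuous hccont hcmem).norm
  have hweq : ∀ t ∈ Set.Icc 0 h, w t = ‖v' t‖ := fun t ht => by
    simp only [hw, hcid t ht]
  have hwnonneg : ∀ t, 0 ≤ w t := fun t => norm_nonneg _
  -- F t = ∫₀ᵗ w
  set F : ℝ → ℝ := fun t => ∫ s in (0:ℝ)..t, w s with hF
  have hFderiv : ∀ t : ℝ, HasDerivAt F (w t) t := fun t =>
    intervalIntegral.integral_hasDerivAt_right (hwcont.intervalIntegrable 0 t)
      hwcont.stronglyMeasurable.stronglyMeasurableAtFilter hwcont.continuousAt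
  have hFcont : Continuous F := continuous_iff_continuousAt.mpr fun t => (hFderiv t).continuousAt
  have hF0 : F 0 = 0 := intervalIntegral.integral_same
  -- continuity of v on [0,h]
  have hvcont : ContinuousOn v (Set.Icc 0 h) := fun t ht =>
    (hder t ht).continuousAt.continuousWithinAt
  -- main integral quantities
  set I := ∫ t in (0:ℝ)..h, w t ^ 2 with hI
  set J := ∫ t in (0:ℝ)..h, t * w t with hJ
  have hIrw : (∫ t in (0:ℝ)..h, ‖v' t‖ ^ 2) = I := by
    refine intervalIntegral.integral_congr fun t ht => ?_
    rw [huIcc] at ht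
    rw [hweq t ht]
  have hInn : 0 ≤ I := intervalIntegral.integral_nonneg hh.le fun t _ => sq_nonneg _
  have hJnn : 0 ≤ J := intervalIntegral.integral_nonneg hh.le fun t ht =>
    mul_nonneg ht.1 (hwnonneg t)
  -- pointwise bound: ‖v t‖ ≤ F h - F t for t ∈ [0,h]
  have hptw : ∀ t ∈ Set.Icc 0 h, ‖v t‖ ≤ F h - F t := by
    intro t ht
    have hsub : Set.uIcc t h ⊆ Set.Icc 0 h := by
      rw [Set.uIcc_of_le ht.2]
      exact Set.Icc_subset_Icc ht.1 le_rfl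
    have hftc : ∫ s in t..h, v' s = v h - v t :=
      intervalIntegral.integral_eq_sub_of_hasDerivAt (fun x hx => hder x (hsub hx))
        ((hcont.mono hsub).intervalIntegrable)
    have hvt : ‖v t‖ = ‖∫ s in t..h, v' s‖ := by
      rw [hftc, hvh, zero_sub, norm_neg]
    have hnormle : ‖∫ s in t..h, v' s‖ ≤ ∫ s in t..h, ‖v' s‖ :=
      intervalIntegral.norm_integral_le_integral_norm ht.2
    have hcongr : (∫ s in t..h, ‖v' s‖) = ∫ s in t..h, w s := by
      refine intervalIntegral.integral_congr fun s hs => ?_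
      exact (hweq s (hsub hs)).symm
    have hadj : F t + (∫ s in t..h, w s) = F h := by
      exact intervalIntegral.integral_add_adjacent_intervals
        (hwcont.intervalIntegrable 0 t) (hwcont.intervalIntegrable t h)
    calc ‖v t‖ ≤ ∫ s in t..h, ‖v' s‖ := hvt ▸ hnormle
      _ = ∫ s in t..h, w s := hcongr
      _ = F h - F t := by linarith [hadj]
  -- ∫ ‖v‖ ≤ ∫ (F h - F ·)
  have hint_v : IntervalIntegrable (fun t => ‖v t‖) volume 0 h := by
    apply ContinuousOn.intervalIntegrable
    rw [huIcc]; exact hvcont.norm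
  have hint_Fh : IntervalIntegrable (fun t => F h - F t) volume 0 h :=
    ((continuous_const.sub hFcont)).intervalIntegrable 0 h
  have h1 : (∫ t in (0:ℝ)..h, ‖v t‖) ≤ ∫ t in (0:ℝ)..h, (F h - F t) :=
    intervalIntegral.integral_mono_on hh.le hint_v hint_Fh hptw
  -- integration by parts: ∫ (F h - F t) = ∫ t * w t
  have h2 : (∫ t in (0:ℝ)..h, (F h - F t)) = J := by
    have hparts := intervalIntegral.integral_mul_deriv_eq_deriv_mul
      (u := fun t : ℝ => t) (u' := fun _ => (1:ℝ)) (v := F) (v' := w)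
      (fun x _ => hasDerivAt_id x) (fun x _ => hFderiv x)
      (continuous_const.intervalIntegrable 0 h) (hwcont.intervalIntegrable 0 h)
    simp only [one_mul, hF0, mul_zero, zero_mul, sub_zero] at hparts
    have hsplit : (∫ t in (0:ℝ)..h, (F h - F t))
        = (∫ t in (0:ℝ)..h, F h) - ∫ t in (0:ℝ)..h, F t :=
      intervalIntegral.integral_sub (continuous_const.intervalIntegrable 0 h)
        (hFcont.intervalIntegrable 0 h)
    rw [hsplit, intervalIntegral.integral_const, hJ, hparts]
    simp
  -- ∫ t ‖v' t‖ = J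
  have h3 : (∫ t in (0:ℝ)..h, (‖v t‖ + t * ‖v' t‖))
      = (∫ t in (0:ℝ)..h, ‖v t‖) + ∫ t in (0:ℝ)..h, t * w t := by
    have hcongr : (∫ t in (0:ℝ)..h, (‖v t‖ + t * ‖v' t‖))
        = ∫ t in (0:ℝ)..h, (‖v t‖ + t * w t) := by
      refine intervalIntegral.integral_congr fun t ht => ?_
      rw [huIcc] at ht
      rw [hweq t ht]
    rw [hcongr]
    exact intervalIntegral.integral_add hint_v
      ((continuous_id.mul hwcont).intervalIntegrable 0 h)
  -- hence I ≤ 2 C₂ J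
  have hI2J : I ≤ 2 * C₂ * J := by
    rw [hIrw] at hineq
    rw [h3] at hineq
    have : (∫ t in (0:ℝ)..h, ‖v t‖) ≤ J := by rw [← h2]; exact h1
    nlinarith [hineq, this, hC₂.le]
  -- Cauchy–Schwarz: J² ≤ (h³/3) I
  have hcs : J ^ 2 ≤ (h ^ 3 / 3) * I := by
    have := my_cauchy_schwarz (f := fun t : ℝ => t) (g := w) continuous_id hwcont hh.le
    have hh3 : (∫ t in (0:ℝ)..h, t ^ 2) = h ^ 3 / 3 := by
      rw [integral_pow]; norm_num
    rw [hh3] at this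
    exact this
  -- first conclusion
  have hIbound : I ≤ (4 / 3) * C₂ ^ 2 * h ^ 3 := by
    rcases eq_or_lt_of_le hInn with hI0 | hIpos
    · rw [← hI0]; positivity
    · have hsq : I * I ≤ (2 * C₂ * J) * (2 * C₂ * J) :=
        mul_le_mul hI2J hI2J hInn (by positivity)
      have : I * I ≤ ((4 / 3) * C₂ ^ 2 * h ^ 3) * I := by nlinarith [hcs, hC₂.le]
      exact le_of_mul_le_mul_right (by linarith [this]) hIpos
  constructor
  · rw [hIrw]; exact hIbound
  -- second conclusion
  · intro t ht
    have hFt : 0 ≤ F t := intervalIntegral.integral_nonneg ht.1 fun s _ => hwnonneg s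
    have hFh : ‖v t‖ ≤ F h := le_trans (hptw t ht) (by linarith)
    -- Cauchy–Schwarz with 1: (F h)² ≤ h * I
    have hcs2 : F h ^ 2 ≤ h * I := by
      have := my_cauchy_schwarz (f := fun _ : ℝ => (1:ℝ)) (g := w) continuous_const hwcont hh.le
      simp only [one_mul, one_pow] at this
      rw [intervalIntegral.integral_const] at this
      simpa using this
    have hFhnn : 0 ≤ F h := intervalIntegral.integral_nonneg hh.le fun s _ => hwnonneg s
    have hsq : F h ^ 2 ≤ (2 * C₂ * h ^ 2) ^ 2 := by nlinarith [hcs2, hIbound, hh.le, hC₂.le]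
    have h2C : (0:ℝ) ≤ 2 * C₂ * h ^ 2 := by positivity
    have hfin : F h ≤ 2 * C₂ * h ^ 2 :=
      (pow_le_pow_iff_left₀ hFhnn h2C two_ne_zero).mp hsq
    linarith [hFh, hfin]
end

section
/- Stability under perturbation of lightcones: let g be an L-Lipschitz Lorentzian metric on a chart U ⊆ ℝ^n with g₀ = standard Minkowski product at 0 ∈ U, and for h > 0 define g^h(v,w) = ⟨v,w⟩ + 4·L·h·v_t·w_t. Then for all x ∈ U with ‖x‖ ≤ h and all Euclidean unit vectors v: (1) |g_x(v,v) − g^h(v,v)| ≤ 5·L·h, and (2) if g_x(v,v) > 0 then g^h(v,v) > 0. -/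
/-- Stability under perturbation of lightcones: for an `L`-Lipschitz Lorentzian metric
`g` with `g₀` the Minkowski product and `g^h(v,w) = ⟨v,w⟩ + 4Lh v_t w_t`, for all
`‖x‖ ≤ h` and unit vectors `v`: (1) `|g_x(v,v) − g^h(v,v)| ≤ 5Lh`; (2) if
`g_x(v,v) > 0` then `g^h(v,v) > 0`. -/
theorem lightcone_perturbation {n : ℕ} {U : Set (EuclideanSpace ℝ (Fin (n + 1)))}
    (hU : IsOpen U) (h0U : (0 : EuclideanSpace ℝ (Fin (n + 1))) ∈ U)
    {L h : ℝ} (hL : 0 < L) (hh : 0 < h) (hLh : L * h < 1 / 2)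
    (g : EuclideanSpace ℝ (Fin (n + 1)) →
      (EuclideanSpace ℝ (Fin (n + 1)) →L[ℝ] EuclideanSpace ℝ (Fin (n + 1)) →L[ℝ] ℝ))
    (hlip : ∀ x ∈ U, ∀ y ∈ U, ∀ v w : EuclideanSpace ℝ (Fin (n + 1)),
      ‖v‖ = 1 → ‖w‖ = 1 → |g x v w - g y v w| ≤ L * ‖x - y‖)
    (hg0 : ∀ v w : EuclideanSpace ℝ (Fin (n + 1)), g 0 v w = mink v w) :
    ∀ x ∈ U, ‖x‖ ≤ h → ∀ v : EuclideanSpace ℝ (Fin (n + 1)), ‖v‖ = 1 →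
      (|g x v v - (mink v v + 4 * L * h * (v 0) ^ 2)| ≤ 5 * L * h) ∧
        (0 < g x v v → 0 < mink v v + 4 * L * h * (v 0) ^ 2) := by

  intro x hx hxh v hv
  have hlx := hlip x hx 0 h0U v v hv hv
  rw [hg0] at hlx
  have hxn : ‖x - 0‖ = ‖x‖ := by simp
  rw [hxn] at hlx
  have hab : |g x v v - mink v v| ≤ L * h := by
    refine hlx.trans ?_
    exact mul_le_mul_of_nonneg_left hxh hL.le
  have h1 : ∑ i : Fin (n+1), (v i)^2 = 1 := by
    have hn := EuclideanSpace.norm_eq v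
    rw [hv] at hn
    have hs : Real.sqrt (∑ i : Fin (n+1), ‖v i‖ ^ 2) = 1 := hn.symm
    have := Real.sqrt_eq_one.mp hs
    simpa [Real.norm_eq_abs, sq_abs] using this
  rw [Fin.sum_univ_succ] at h1
  have hm : mink v v = 2 * (v 0)^2 - 1 := by
    have hsum : ∑ i : Fin n, v i.succ * v i.succ = ∑ i : Fin n, (v i.succ)^2 := by
      apply Finset.sum_congr rfl; intro i _; ring
    unfold mink
    rw [hsum]
    nlinarith [h1]
  have ht1 : (v 0)^2 ≤ 1 := by
    have : (0:ℝ) ≤ ∑ i : Fin n, (v i.succ)^2 := Finset.sum_nonneg fun i _ => sq_nonneg _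
    linarith
  have hab' := abs_le.mp hab
  constructor
  · rw [abs_le]
    constructor <;> nlinarith [sq_nonneg (v 0), hL.le, hh.le]
  · intro hpos
    nlinarith [hab'.1, mul_pos hL hh]
end
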